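/- For any Dice type τ and any values v, v_x : τ, the syntactic identity (v ⇔τ v_x) = (form_τ(x) ⇔τ v)[x ↦τ v_x] holds: the pointwise iff of the two values equals the result of typed substitution of v_x for x in the pointwise iff of the form of x with v. -/
import Mathlib


/-- Dice types: `τ ::= Bool | τ1 × τ2`. -/
inductive Ty : Type
  | bool : Ty
  | prod : Ty → Ty → Ty

/-- Dice values: `v ::= true | false | (v, v)`. -/
inductive Val : Type
  | bool : Bool → Val
  | pair : Val → Val → Val

/-- Typing of values. -/
def Val.hasTy : Val → Ty → Bool
  | .bool _, .bool => true
  | .pair v1 v2, .prod τ1 τ2 => v1.hasTy τ1 && v2.hasTy τ2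
  | _, _ => false

/-- Variables: a base program-variable name together with a path of
left/right projections (`false` = left, `true` = right).  The derived names
`x_l` and `x_r` of the form function are modeled by extending the path, which
guarantees they are distinct and fresh. -/
abbrev Var : Type := String × List Bool

/-- Propositional formulas over a set of variables `V`. -/
inductive Form (V : Type) : Type
  | tt : Form V
  | ff : Form V
  | var : V → Form V
  | not : Form V → Form V
  | and : Form V → Form V → Form V
  | or : Form V → Form V → Form V
  | iff : Form V → Form V → Form V

/-- Evaluation of a formula under a truth assignment. -/
def Form.eval {V : Type} : Form V → (V → Bool) → Bool
  | .tt, _ => true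
  | .ff, _ => false
  | .var x, σ => σ x
  | .not φ, σ => !(φ.eval σ)
  | .and φ ψ, σ => φ.eval σ && ψ.eval σ
  | .or φ ψ, σ => φ.eval σ || ψ.eval σ
  | .iff φ ψ, σ => φ.eval σ == ψ.eval σ

/-- Tuples of Boolean formulas, shaped like a Dice type. -/
inductive TForm (V : Type) : Type
  | base : Form V → TForm V
  | pair : TForm V → TForm V → TForm V

/-- The form function: `form_Bool(x) = x` and
`form_{τ1×τ2}(x) = (form_{τ1}(x_l), form_{τ2}(x_r))`, where the fresh derived
names `x_l`, `x_r` are modeled by extending the projection path. -/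
def formVar (x : String) : Ty → List Bool → TForm Var
  | .bool, p => .base (.var (x, p))
  | .prod τ1 τ2, p =>
      .pair (formVar x τ1 (p ++ [false])) (formVar x τ2 (p ++ [true]))

/-- Pointwise iff: `φ1 ⇔Bool φ2 = (φ1 ⇔ φ2)` and
`(φ̂1, φ̂2) ⇔_{τ1×τ2} (φ̂1', φ̂2') = (φ̂1 ⇔τ1 φ̂1') ∧ (φ̂2 ⇔τ2 φ̂2')`
(any shape mismatch yields the false formula). -/
def TForm.tiff {V : Type} : TForm V → TForm V → Form V
  | .base φ, .base ψ => .iff φ ψ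
  | .pair a b, .pair c d => .and (a.tiff c) (b.tiff d)
  | _, _ => .ff

/-- A value interpreted as a (tuple of) constant Boolean formula(s) `⊤`/`⊥`. -/
def Val.toForm {V : Type} : Val → TForm V
  | .bool b => .base (if b then .tt else .ff)
  | .pair v1 v2 => .pair v1.toForm v2.toForm

/-- The component of a tuple of formulas at a given projection path. -/
def TForm.lookup {V : Type} : TForm V → List Bool → Option (Form V)
  | .base φ, [] => some φ
  | .pair a _, false :: p => a.lookup p
  | .pair _ b, true :: p => b.lookup p
  | _, _ => none

/-- Typed substitution `φ[x ↦τ φ̂]` on a single formula: every variable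
`(x, p)` derived from `x` is replaced by the component of the substituted tuple
`φ̂` at path `p`.  (Performing the sequential substitutions
`φ[x_l ↦τa φ̂a][x_r ↦τb φ̂b]` of the recursive definition amounts exactly to
this path-indexed replacement, since the derived names are fresh/distinct.) -/
def Form.tsubst (x : String) (t : TForm Var) : Form Var → Form Var
  | .tt => .tt
  | .ff => .ff
  | .var (y, p) =>
      if y = x then (t.lookup p).getD (.var (y, p)) else .var (y, p)
  | .not φ => .not (φ.tsubst x t)
  | .and φ ψ => .and (φ.tsubst x t) (ψ.tsubst x t)
  | .or φ ψ => .or (φ.tsubst x t) (ψ.tsubst x t)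
  | .iff φ ψ => .iff (φ.tsubst x t) (ψ.tsubst x t)

theorem typed_subst_aux (x : String) (W : TForm Var) :
    ∀ (τ : Ty) (v vx : Val), v.hasTy τ → vx.hasTy τ → ∀ p : List Bool,
      (∀ q, W.lookup (p ++ q) = (Val.toForm (V := Var) vx).lookup q) →
      ∀ σ : Var → Bool,
        (TForm.tiff v.toForm vx.toForm).eval σ
          = ((TForm.tiff (formVar x τ p) v.toForm).tsubst x W).eval σ := by
  intro τ
  induction τ with
  | bool =>
    intro v vx hv hvx p h σ
    cases v with
    | pair _ _ => simp [Val.hasTy] at hv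
    | bool b =>
      cases vx with
      | pair _ _ => simp [Val.hasTy] at hvx
      | bool c =>
        have hp := h []
        simp [Val.toForm, TForm.lookup] at hp
        cases b <;> cases c <;>
          simp_all [Val.toForm, formVar, TForm.tiff, Form.tsubst, Form.eval]
  | prod τ1 τ2 ih1 ih2 =>
    intro v vx hv hvx p h σ
    cases v with
    | bool _ => simp [Val.hasTy] at hv
    | pair v1 v2 =>
      cases vx with
      | bool _ => simp [Val.hasTy] at hvx
      | pair w1 w2 =>
        simp [Val.hasTy] at hv hvx
        have h1 : ∀ q, W.lookup ((p ++ [false]) ++ q)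
            = (Val.toForm (V := Var) w1).lookup q := by
          intro q
          have := h ([false] ++ q)
          simpa [List.append_assoc, Val.toForm, TForm.lookup] using this
        have h2 : ∀ q, W.lookup ((p ++ [true]) ++ q)
            = (Val.toForm (V := Var) w2).lookup q := by
          intro q
          have := h ([true] ++ q)
          simpa [List.append_assoc, Val.toForm, TForm.lookup] using this
        simp [Val.toForm, formVar, TForm.tiff, Form.tsubst, Form.eval,
          ih1 v1 w1 hv.1 hvx.1 (p ++ [false]) h1 σ,
          ih2 v2 w2 hv.2 hvx.2 (p ++ [true]) h2 σ]

/-- **Typed Substitution Lemma.** For any Dice type `τ` and values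
`v, v_x : τ`, the syntactic identity
`(v ⇔τ v_x) = (form_τ(x) ⇔τ v)[x ↦τ v_x]` holds, where equality of formulas
means semantic equivalence as Boolean functions of the remaining variables. -/
theorem typed_substitution (τ : Ty) (v vx : Val)
    (hv : v.hasTy τ) (hvx : vx.hasTy τ) (x : String) :
    ∀ σ : Var → Bool,
      (TForm.tiff v.toForm vx.toForm).eval σ
        = ((TForm.tiff (formVar x τ []) v.toForm).tsubst x vx.toForm).eval σ := by
  exact typed_subst_aux x vx.toForm τ v vx hv hvx [] (fun q => rfl)
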